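/- (Corollary 3) For all positive integers m and n, the identity \(\sum_{a=1}^{m}\sum_{b=1}^{n}\binom{m+n-a-b}{m-a}\frac{(m+n)^{a+b-2}}{m^{a-1}n^{b-1}}=\frac{(m+n)^{m+n-1}}{m^{m-1}n^{n-1}}-\frac{mn}{m+n}\binom{m+n}{m}\) holds (as an identity of rational numbers). -/

import Mathlib

open Finset

lemma lem_geom (x : ℚ) (m : ℕ) :
    (∑ i ∈ range (m+1), x^i) + (1-x) * ∑ a ∈ range m, ((m:ℚ) - a) * x^a = (m:ℚ) + 1 := by
  induction m with
  | zero => simp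
  | succ m ih =>
    have h1 : ∑ a ∈ range (m+1), ((m+1:ℚ) - a) * x^a
        = (∑ a ∈ range m, ((m:ℚ) - a) * x^a) + ∑ a ∈ range (m+1), x^a := by
      have e1 : ∀ a ∈ range (m+1), ((m+1:ℚ) - a) * x^a = ((m:ℚ)-a)*x^a + x^a := by
        intro a _; ring
      rw [sum_congr rfl e1, sum_add_distrib, sum_range_succ (f := fun a => ((m:ℚ)-a)*x^a)]
      simp
    have h2 : (1-x) * ∑ a ∈ range (m+1), x^a = 1 - x^(m+1) := by
      have := geom_sum_mul x (m+1)
      nlinarith [this]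
    rw [sum_range_succ (f := fun i => x^i)]
    push_cast
    push_cast at h1
    rw [h1]
    push_cast at ih
    nlinarith [ih, h2]

lemma lem_E (x : ℚ) (j : ℕ) : ∀ i : ℕ, (1-x)^(j+1) * ∑ a ∈ range i, (Nat.choose (j+a) a : ℚ) * x^a
    = ∑ k ∈ range i, (Nat.choose (i+j) k : ℚ) * x^k * (1-x)^(i+j-k) := by
  intro i
  induction i with
  | zero => simp
  | succ i ih =>
    set y := 1 - x with hy
    set R := ∑ k ∈ range i, (Nat.choose (i+j) k : ℚ) * x^k * y^(i+j-k) with hR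
    have hsplit : ∑ k ∈ range (i+1), (Nat.choose (i+1+j) k : ℚ) * x^k * y^(i+1+j-k)
        = (∑ k ∈ range i, (Nat.choose (i+j) k : ℚ) * x^(k+1) * y^(i+j-k))
          + (∑ k ∈ range i, (Nat.choose (i+j) (k+1) : ℚ) * x^(k+1) * y^(i+j-k))
          + y^(i+j+1) := by
      rw [sum_range_succ' (f := fun k => (Nat.choose (i+1+j) k : ℚ) * x^k * y^(i+1+j-k))]
      have e1 : ∀ k ∈ range i, (Nat.choose (i+1+j) (k+1) : ℚ) * x^(k+1) * y^(i+1+j-(k+1))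
          = (Nat.choose (i+j) k : ℚ) * x^(k+1) * y^(i+j-k)
            + (Nat.choose (i+j) (k+1) : ℚ) * x^(k+1) * y^(i+j-k) := by
        intro k _
        have h2 : i+1+j-(k+1) = i+j-k := by omega
        have h1 : i+1+j = (i+j)+1 := by omega
        rw [h2, h1, Nat.choose_succ_succ]
        push_cast; ring
      rw [sum_congr rfl e1, sum_add_distrib]
      have h3 : i+1+j-0 = i+j+1 := by omega
      rw [h3]
      simp
    have hA : ∑ k ∈ range i, (Nat.choose (i+j) k : ℚ) * x^(k+1) * y^(i+j-k) = x * R := by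
      rw [hR, mul_sum]
      apply sum_congr rfl; intro k _; ring
    have hG : ∑ k ∈ range (i+1), (Nat.choose (i+j) k : ℚ) * x^k * y^(i+j+1-k)
        = (∑ k ∈ range i, (Nat.choose (i+j) (k+1) : ℚ) * x^(k+1) * y^(i+j-k)) + y^(i+j+1) := by
      rw [sum_range_succ' (f := fun k => (Nat.choose (i+j) k : ℚ) * x^k * y^(i+j+1-k))]
      have e2 : ∀ k ∈ range i, (Nat.choose (i+j) (k+1) : ℚ) * x^(k+1) * y^(i+j+1-(k+1))
          = (Nat.choose (i+j) (k+1) : ℚ) * x^(k+1) * y^(i+j-k) := by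
        intro k _
        have h2 : i+j+1-(k+1) = i+j-k := by omega
        rw [h2]
      rw [sum_congr rfl e2]
      simp
    have hG2 : ∑ k ∈ range (i+1), (Nat.choose (i+j) k : ℚ) * x^k * y^(i+j+1-k)
        = y * R + (Nat.choose (i+j) i : ℚ) * x^i * y^(j+1) := by
      rw [sum_range_succ]
      have h4 : i+j+1-i = j+1 := by omega
      rw [h4, hR, mul_sum]
      congr 1
      apply sum_congr rfl; intro k hk
      have hk' : k < i := mem_range.mp hk
      have h5 : i+j+1-k = (i+j-k)+1 := by omega
      rw [h5, pow_succ]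
      ring
    have hBG : y * R + (Nat.choose (i+j) i : ℚ) * x^i * y^(j+1)
        = (∑ k ∈ range i, (Nat.choose (i+j) (k+1) : ℚ) * x^(k+1) * y^(i+j-k)) + y^(i+j+1) :=
      hG2.symm.trans hG
    rw [sum_range_succ, mul_add, ih, hsplit, hA]
    have hji : (Nat.choose (j+i) i : ℚ) = (Nat.choose (i+j) i : ℚ) := by rw [add_comm]
    rw [hji]
    have hxy : x + y = 1 := by rw [hy]; ring
    linear_combination hBG + R * hxy

lemma lem_star (x : ℚ) (i j : ℕ) :
    (1-x)^(j+1) * (∑ a ∈ range (i+1), (Nat.choose (j+a) a : ℚ) * x^a)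
    + x^(i+1) * (∑ b ∈ range (j+1), (Nat.choose (i+b) b : ℚ) * (1-x)^b) = 1 := by
  set y := 1-x with hy
  have h1 := lem_E x j (i+1)
  have h2 := lem_E y i (j+1)
  have hyx : 1 - y = x := by rw [hy]; ring
  rw [hyx] at h2
  have hxy1 : x + y = 1 := by rw [hy]; ring
  have hbin : ∑ k ∈ range (i+j+2), x^k * y^(i+j+1-k) * ((i+j+1).choose k : ℚ) = 1 := by
    have h := add_pow x y (i+j+1)
    rw [hxy1, one_pow] at h
    exact h.symm
  have hsplit : ∑ k ∈ range (i+j+2), x^k * y^(i+j+1-k) * ((i+j+1).choose k : ℚ)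
      = (∑ k ∈ range (i+1), x^k * y^(i+j+1-k) * ((i+j+1).choose k : ℚ))
        + ∑ k ∈ range (j+1), x^(i+1+k) * y^(i+j+1-(i+1+k)) * ((i+j+1).choose (i+1+k) : ℚ) := by
    have hr : i+j+2 = (i+1)+(j+1) := by omega
    rw [hr, Finset.sum_range_add]
  have hp1 : ∑ k ∈ range (i+1), x^k * y^(i+j+1-k) * ((i+j+1).choose k : ℚ)
      = ∑ k ∈ range (i+1), (Nat.choose (i+1+j) k : ℚ) * x^k * y^(i+1+j-k) := by
    apply sum_congr rfl; intro k _
    have e1 : i+1+j = i+j+1 := by omega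
    rw [e1]; ring
  have hp2 : ∑ k ∈ range (j+1), x^(i+1+k) * y^(i+j+1-(i+1+k)) * ((i+j+1).choose (i+1+k) : ℚ)
      = ∑ k ∈ range (j+1), (Nat.choose (j+1+i) k : ℚ) * y^k * x^(j+1+i-k) := by
    rw [← Finset.sum_range_reflect (fun k => (Nat.choose (j+1+i) k : ℚ) * y^k * x^(j+1+i-k)) (j+1)]
    apply sum_congr rfl; intro k hk
    have hkj : k < j+1 := mem_range.mp hk
    have e2 : j+1-1-k = j-k := by omega
    have e3 : i+j+1-(i+1+k) = j-k := by omega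
    have e4 : j+1+i-(j-k) = i+1+k := by omega
    have e5 : j+1+i = i+j+1 := by omega
    have e6 : ((i+j+1).choose (i+1+k) : ℚ) = ((i+j+1).choose (j-k) : ℚ) := by
      have : j - k = (i+j+1) - (i+1+k) := by omega
      rw [this, Nat.choose_symm (by omega)]
    rw [e2, e3, e4, e5, e6]
    ring
  rw [hp1, hp2] at hsplit
  rw [h1, h2]
  rw [hsplit] at hbin
  exact hbin

lemma lem_D (x : ℚ) (α : ℕ) : ∀ N : ℕ,
    (∑ b ∈ range (N+1), (Nat.choose (α+b) b : ℚ) * x^b)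
      - (1-x) * ∑ b ∈ range N, (Nat.choose (α+1+b) b : ℚ) * x^b
    = (Nat.choose (α+N+1) N : ℚ) * x^N := by
  intro N
  induction N with
  | zero => simp
  | succ N ih =>
    rw [sum_range_succ (f := fun b => (Nat.choose (α+b) b : ℚ)*x^b),
        sum_range_succ (f := fun b => (Nat.choose (α+1+b) b : ℚ)*x^b)]
    have hp : ((α+(N+1)+1).choose (N+1) : ℚ) = ((α+N+1).choose N : ℚ) + ((α+N+1).choose (N+1) : ℚ) := by
      have e : α+(N+1)+1 = (α+N+1)+1 := by omega
      rw [e, Nat.choose_succ_succ]; push_cast; ring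
    have e2 : α+1+N = α+N+1 := by omega
    rw [e2, hp]
    have e3 : α+(N+1) = α+N+1 := by omega
    rw [e3]
    linear_combination ih + x^(N+1) * hp - x^(N+1)*hp

lemma choose_symm' {a b n : ℕ} (h : a + b = n) : Nat.choose n a = Nat.choose n b := by
  subst h
  rw [← Nat.choose_symm (Nat.le_add_right a b)]
  congr 1
  omega

lemma lem_row (x : ℚ) (κ : ℕ) : ∀ m : ℕ,
    x * (∑ i ∈ range (m+1), (Nat.choose (κ+1+i) i : ℚ) * x^i)
    + (1-x) * (∑ a ∈ range m, ((m:ℚ)-a) * (Nat.choose (κ+1+a) a : ℚ) * x^a)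
    - (∑ a ∈ range m, ((m:ℚ)-a) * (Nat.choose (κ+a) a : ℚ) * x^a)
    = (Nat.choose (m+1+κ) (κ+1) : ℚ) * x^(m+1) := by
  intro m
  induction m with
  | zero =>
    have : Nat.choose (0+1+κ) (κ+1) = 1 := by
      have : 0+1+κ = κ+1 := by omega
      rw [this, Nat.choose_self]
    rw [this]; simp
  | succ m ih =>
    have hw1 : ∑ a ∈ range (m+1), ((m+1:ℚ)-a) * (Nat.choose (κ+1+a) a : ℚ) * x^a
        = (∑ a ∈ range m, ((m:ℚ)-a) * (Nat.choose (κ+1+a) a : ℚ) * x^a)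
          + ∑ a ∈ range (m+1), (Nat.choose (κ+1+a) a : ℚ) * x^a := by
      have e1 : ∀ a ∈ range (m+1), ((m+1:ℚ)-a) * (Nat.choose (κ+1+a) a : ℚ) * x^a
          = ((m:ℚ)-a) * (Nat.choose (κ+1+a) a : ℚ) * x^a + (Nat.choose (κ+1+a) a : ℚ) * x^a := by
        intro a _; ring
      rw [sum_congr rfl e1, sum_add_distrib,
        sum_range_succ (f := fun a => ((m:ℚ)-a) * (Nat.choose (κ+1+a) a : ℚ) * x^a)]
      simp
    have hw2 : ∑ a ∈ range (m+1), ((m+1:ℚ)-a) * (Nat.choose (κ+a) a : ℚ) * x^a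
        = (∑ a ∈ range m, ((m:ℚ)-a) * (Nat.choose (κ+a) a : ℚ) * x^a)
          + ∑ a ∈ range (m+1), (Nat.choose (κ+a) a : ℚ) * x^a := by
      have e1 : ∀ a ∈ range (m+1), ((m+1:ℚ)-a) * (Nat.choose (κ+a) a : ℚ) * x^a
          = ((m:ℚ)-a) * (Nat.choose (κ+a) a : ℚ) * x^a + (Nat.choose (κ+a) a : ℚ) * x^a := by
        intro a _; ring
      rw [sum_congr rfl e1, sum_add_distrib,
        sum_range_succ (f := fun a => ((m:ℚ)-a) * (Nat.choose (κ+a) a : ℚ) * x^a)]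
      simp
    have hD := lem_D x κ m
    have hS1 : ∑ a ∈ range (m+1), (Nat.choose (κ+1+a) a : ℚ) * x^a
        = (∑ a ∈ range m, (Nat.choose (κ+1+a) a : ℚ) * x^a) + (Nat.choose (κ+1+m) m : ℚ) * x^m :=
      sum_range_succ _ m
    -- key cancellation lemma values
    have hc1 : (Nat.choose (m+1+κ) (κ+1) : ℚ) = (Nat.choose (κ+m+1) m : ℚ) := by
      norm_cast
      rw [choose_symm' (by omega : (κ+1) + m = m+1+κ)]
      congr 1; omega
    have hc2 : (Nat.choose (m+1+1+κ) (κ+1) : ℚ) = (Nat.choose (κ+1+(m+1)) (m+1) : ℚ) := by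
      norm_cast
      rw [choose_symm' (by omega : (κ+1) + (m+1) = m+1+1+κ)]
      congr 1; omega
    rw [sum_range_succ (f := fun i => (Nat.choose (κ+1+i) i : ℚ) * x^i)]
    push_cast at hw1 hw2 ⊢
    have hc3 : (Nat.choose (κ+1+m) m : ℚ) = (Nat.choose (κ+m+1) m : ℚ) := by
      norm_cast
      congr 1; omega
    rw [hw1, hw2, hc2]
    push_cast at ih hD hS1 hc1 hc3
    linear_combination ih + (1-x)*hS1 - hD + x^(m+1)*hc1 + ((1-x)*x^m)*hc3

lemma lem_rect (x : ℚ) (μ : ℕ) : ∀ ν : ℕ,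
    (∑ j ∈ range (ν+1), ∑ i ∈ range (μ+1), (Nat.choose (i+j) i : ℚ) * x^i * (1-x)^j)
    + x^(μ+1) * (∑ a ∈ range ν, ((ν:ℚ)-a) * (Nat.choose (μ+a) a : ℚ) * (1-x)^a)
    + (1-x)^(ν+1) * (∑ a ∈ range μ, ((μ:ℚ)-a) * (Nat.choose (ν+a) a : ℚ) * x^a)
    = (μ:ℚ) + (ν:ℚ) + 1 := by
  intro ν
  induction ν with
  | zero =>
    simp only [range_one, sum_singleton, Nat.add_zero, Nat.choose_self, Nat.cast_one,
      Nat.zero_add, Nat.cast_zero, range_zero, sum_empty, mul_zero, add_zero, pow_one,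
      Nat.cast_ofNat, pow_zero, mul_one, one_mul]
    linear_combination lem_geom x μ
  | succ ν ih =>
    have hstar := lem_star x μ (ν+1)
    have hrow := lem_row x ν μ
    have hRnew : ∑ i ∈ range (μ+1), (Nat.choose (i+(ν+1)) i : ℚ) * x^i * (1-x)^(ν+1)
        = (1-x)^(ν+1) * ∑ i ∈ range (μ+1), (Nat.choose (ν+1+i) i : ℚ) * x^i := by
      rw [mul_sum]
      apply sum_congr rfl; intro i _
      have : i+(ν+1) = ν+1+i := by omega
      rw [this]; ring
    have hSfull : ∑ b ∈ range (ν+2), (Nat.choose (μ+b) b : ℚ) * (1-x)^b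
        = (∑ b ∈ range (ν+1), (Nat.choose (μ+b) b : ℚ) * (1-x)^b)
          + (Nat.choose (μ+(ν+1)) (ν+1) : ℚ) * (1-x)^(ν+1) := sum_range_succ _ (ν+1)
    have hcc : (Nat.choose (μ+(ν+1)) (ν+1) : ℚ) = (Nat.choose (μ+1+ν) (ν+1) : ℚ) := by
      norm_cast; congr 1; omega
    have hw : ∑ a ∈ range (ν+1), ((ν+1:ℚ)-a) * (Nat.choose (μ+a) a : ℚ) * (1-x)^a
        = (∑ a ∈ range ν, ((ν:ℚ)-a) * (Nat.choose (μ+a) a : ℚ) * (1-x)^a)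
          + ∑ a ∈ range (ν+1), (Nat.choose (μ+a) a : ℚ) * (1-x)^a := by
      have e1 : ∀ a ∈ range (ν+1), ((ν+1:ℚ)-a) * (Nat.choose (μ+a) a : ℚ) * (1-x)^a
          = ((ν:ℚ)-a) * (Nat.choose (μ+a) a : ℚ) * (1-x)^a + (Nat.choose (μ+a) a : ℚ) * (1-x)^a := by
        intro a _; ring
      rw [sum_congr rfl e1, sum_add_distrib,
        sum_range_succ (f := fun a => ((ν:ℚ)-a) * (Nat.choose (μ+a) a : ℚ) * (1-x)^a)]
      simp
    rw [sum_range_succ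
      (f := fun j => ∑ i ∈ range (μ+1), (Nat.choose (i+j) i : ℚ) * x^i * (1-x)^j)]
    push_cast at hw ⊢
    rw [hw, hRnew]
    push_cast at ih hstar hrow hSfull hcc
    linear_combination ih + (1-x)^(ν+1)*hrow + hstar - x^(μ+1)*hSfull - x^(μ+1)*(1-x)^(ν+1)*hcc

lemma nat_shift (ν a : ℕ) : (a+1) * Nat.choose (ν+a+1) (a+1) = (ν+1) * Nat.choose (ν+1+a) a := by
  have h1 := Nat.add_one_mul_choose_eq (ν+a) a
  have h2 := Nat.add_one_mul_choose_eq (ν+a) ν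
  have h3 : Nat.choose (ν+a) ν = Nat.choose (ν+a) a := choose_symm' rfl
  have h4 : Nat.choose (ν+a+1) (ν+1) = Nat.choose (ν+1+a) a := by
    rw [choose_symm' (by omega : (ν+1) + a = ν+a+1)]
    congr 1
    omega
  rw [h3, h4] at h2
  rw [mul_comm, mul_comm (ν+1)]
  exact h1.symm.trans h2

lemma lem_K2 (μ ν : ℕ) (x : ℚ) (hx : ((μ:ℚ)+(ν:ℚ)+2) * x = (μ:ℚ)+1) :
    ∑ a ∈ range (μ+1), (((μ:ℚ)+1)-(a:ℚ)) * (Nat.choose (ν+a) a : ℚ) * x^a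
    = ((μ:ℚ)+1) * (Nat.choose (μ+ν+2) (μ+1) : ℚ) * x^(μ+1) := by
  have hy : ((μ:ℚ)+(ν:ℚ)+2) * (1-x) = (ν:ℚ)+1 := by linear_combination -hx
  have hyne : (1:ℚ)-x ≠ 0 := by
    intro h
    rw [h, mul_zero] at hy
    have : ((ν:ℚ)+1) > 0 := by positivity
    linarith
  obtain (rfl | ⟨ρ, rfl⟩) : μ = 0 ∨ ∃ ρ, μ = ρ+1 := by
    rcases μ with _ | ρ
    · exact Or.inl rfl
    · exact Or.inr ⟨ρ, rfl⟩
  · -- μ = 0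
    simp only [zero_add, sum_range_one, Nat.cast_zero, Nat.add_zero, Nat.choose_zero_right,
      Nat.choose_one_right, pow_zero, pow_one, Nat.cast_one, mul_one, sub_zero, one_mul,
      Nat.cast_ofNat]
    push_cast
    linear_combination -hx
  · set μ := ρ+1 with hμ
    set U := ∑ a ∈ range (μ+1), (Nat.choose (ν+a) a : ℚ) * x^a with hU
    set U' := ∑ a ∈ range μ, (Nat.choose (ν+1+a) a : ℚ) * x^a with hU'
    set V1 := ∑ b ∈ range (ν+1), (Nat.choose (μ+b) b : ℚ) * (1-x)^b with hV1
    set V2 := ∑ b ∈ range (ν+2), (Nat.choose (ρ+b) b : ℚ) * (1-x)^b with hV2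
    have hsplit : ∑ a ∈ range (μ+1), (((μ:ℚ)+1)-(a:ℚ)) * (Nat.choose (ν+a) a : ℚ) * x^a
        = ((μ:ℚ)+1) * U - ∑ a ∈ range (μ+1), (a:ℚ) * (Nat.choose (ν+a) a : ℚ) * x^a := by
      rw [hU, mul_sum, ← sum_sub_distrib]
      apply sum_congr rfl; intro a _; ring
    have hshift : ∑ a ∈ range (μ+1), (a:ℚ) * (Nat.choose (ν+a) a : ℚ) * x^a
        = ((ν:ℚ)+1) * x * U' := by
      rw [sum_range_succ' (f := fun a => (a:ℚ) * (Nat.choose (ν+a) a : ℚ) * x^a)]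
      have e1 : ∀ a ∈ range μ, ((a+1:ℕ):ℚ) * (Nat.choose (ν+(a+1)) (a+1) : ℚ) * x^(a+1)
          = ((ν:ℚ)+1) * (Nat.choose (ν+1+a) a : ℚ) * x^(a+1) := by
        intro a _
        have h := nat_shift ν a
        have e : ν+(a+1) = ν+a+1 := by omega
        rw [e]
        have hq := congrArg (fun n : ℕ => (n:ℚ)) h
        push_cast at hq ⊢
        linear_combination x^(a+1) * hq
      rw [sum_congr rfl e1, hU', mul_sum]
      simp only [Nat.cast_zero, zero_mul, mul_zero, add_zero]
      apply sum_congr rfl; intro a _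
      ring
    have hA := lem_star x μ ν
    have hB := lem_star x ρ (ν+1)
    have hD := lem_D (1-x) ρ (ν+1)
    have hxx : (1:ℚ)-(1-x) = x := by ring
    rw [hxx] at hD
    rw [← hU, ← hV1] at hA
    rw [← hU', ← hV2] at hB
    rw [← hV2, ← hV1] at hD
    have hNat : ((μ:ℚ)+1) * (Nat.choose (μ+ν+2) (μ+1) : ℚ)
        = ((μ:ℚ)+(ν:ℚ)+2) * (Nat.choose (ρ+(ν+1)+1) (ν+1) : ℚ) := by
      have h1 := Nat.add_one_mul_choose_eq (μ+ν+1) μ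
      have e' : μ+ν+1+1 = μ+ν+2 := by omega
      rw [e'] at h1
      have h2 : Nat.choose (μ+ν+1) μ = Nat.choose (ρ+(ν+1)+1) (ν+1) := by
        rw [choose_symm' (by omega : μ + (ν+1) = μ+ν+1)]
        congr 1
        omega
      rw [h2] at h1
      have hq := congrArg (fun n : ℕ => (n:ℚ)) h1
      push_cast at hq ⊢
      linear_combination -hq
    rw [hsplit, hshift]
    have EQ : (1-x)^(ν+2) * (((μ:ℚ)+1) * U - ((ν:ℚ)+1) * x * U')
        = (1-x)^(ν+2) * (((μ:ℚ)+1) * (Nat.choose (μ+ν+2) (μ+1) : ℚ) * x^(μ+1)) := by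
      have s1 : (1-x)^(ν+1) * U = 1 - x^(μ+1) * V1 := by linear_combination hA
      have s2 : (1-x)^(ν+2) * U' = 1 - x^μ * V2 := by linear_combination hB
      have s3 : V2 = x * V1 + (Nat.choose (ρ+(ν+1)+1) (ν+1) : ℚ) * (1-x)^(ν+1) := by
        linear_combination hD
      have expand : (1-x)^(ν+2) * (((μ:ℚ)+1) * U - ((ν:ℚ)+1) * x * U')
          = ((μ:ℚ)+1) * (1-x) * ((1-x)^(ν+1) * U) - ((ν:ℚ)+1) * x * ((1-x)^(ν+2) * U') := by
        ring
      rw [expand, s1, s2, s3]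
      have hkey : ((μ:ℚ)+1) * (1-x) = ((ν:ℚ)+1) * x := by
        linear_combination x*hy - (1-x)*hx
      linear_combination (1 - x^(μ+1)*V1) * hkey
        - x^(μ+1) * ((Nat.choose (ρ+(ν+1)+1) (ν+1) : ℚ)) * (1-x)^(ν+1) * hy
        - x^(μ+1) * (1-x)^(ν+2) * hNat
    exact mul_left_cancel₀ (pow_ne_zero (ν+2) hyne) EQ

lemma lem_main (μ ν : ℕ) (x : ℚ) (hx : ((μ:ℚ)+(ν:ℚ)+2)*x = (μ:ℚ)+1) :
    ∑ j ∈ range (ν+1), ∑ i ∈ range (μ+1), (Nat.choose (i+j) i : ℚ) * x^i * (1-x)^j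
    = ((μ:ℚ)+(ν:ℚ)+2) - ((μ:ℚ)+(ν:ℚ)+2) * (Nat.choose (μ+ν+2) (μ+1) : ℚ) * x^(μ+1) * (1-x)^(ν+1) := by
  have hy : ((ν:ℚ)+(μ:ℚ)+2)*(1-x) = (ν:ℚ)+1 := by linear_combination -hx
  have hrect := lem_rect x μ ν
  have hK2b := lem_K2 μ ν x hx
  have hK2a := lem_K2 ν μ (1-x) hy
  have hstar := lem_star x μ ν
  have hwP : (∑ a ∈ range (ν+1), (((ν:ℚ)+1)-(a:ℚ)) * (Nat.choose (μ+a) a : ℚ) * (1-x)^a)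
      = (∑ a ∈ range ν, ((ν:ℚ)-(a:ℚ)) * (Nat.choose (μ+a) a : ℚ) * (1-x)^a)
        + ∑ a ∈ range (ν+1), (Nat.choose (μ+a) a : ℚ) * (1-x)^a := by
    have e1 : ∀ a ∈ range (ν+1), (((ν:ℚ)+1)-(a:ℚ)) * (Nat.choose (μ+a) a : ℚ) * (1-x)^a
        = ((ν:ℚ)-(a:ℚ)) * (Nat.choose (μ+a) a : ℚ) * (1-x)^a
          + (Nat.choose (μ+a) a : ℚ) * (1-x)^a := by
      intro a _; ring
    rw [sum_congr rfl e1, sum_add_distrib,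
      sum_range_succ (f := fun a => ((ν:ℚ)-(a:ℚ)) * (Nat.choose (μ+a) a : ℚ) * (1-x)^a)]
    simp
  have hwQ : (∑ a ∈ range (μ+1), (((μ:ℚ)+1)-(a:ℚ)) * (Nat.choose (ν+a) a : ℚ) * x^a)
      = (∑ a ∈ range μ, ((μ:ℚ)-(a:ℚ)) * (Nat.choose (ν+a) a : ℚ) * x^a)
        + ∑ a ∈ range (μ+1), (Nat.choose (ν+a) a : ℚ) * x^a := by
    have e1 : ∀ a ∈ range (μ+1), (((μ:ℚ)+1)-(a:ℚ)) * (Nat.choose (ν+a) a : ℚ) * x^a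
        = ((μ:ℚ)-(a:ℚ)) * (Nat.choose (ν+a) a : ℚ) * x^a
          + (Nat.choose (ν+a) a : ℚ) * x^a := by
      intro a _; ring
    rw [sum_congr rfl e1, sum_add_distrib,
      sum_range_succ (f := fun a => ((μ:ℚ)-(a:ℚ)) * (Nat.choose (ν+a) a : ℚ) * x^a)]
    simp
  have hCC : (Nat.choose (ν+μ+2) (ν+1) : ℚ) = (Nat.choose (μ+ν+2) (μ+1) : ℚ) := by
    norm_cast
    rw [choose_symm' (by omega : (ν+1)+(μ+1) = ν+μ+2)]
    congr 1
    omega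
  linear_combination hrect + x^(μ+1)*hwP - x^(μ+1)*hK2a + (1-x)^(ν+1)*hwQ
    - (1-x)^(ν+1)*hK2b + hstar - ((ν:ℚ)+1)*x^(μ+1)*(1-x)^(ν+1)*hCC

theorem guo_zeng_corollary3 (m n : ℕ) (hm : 0 < m) (hn : 0 < n) :
    ∑ a ∈ Finset.Icc 1 m, ∑ b ∈ Finset.Icc 1 n,
      (Nat.choose (m + n - a - b) (m - a) : ℚ) *
        ((m + n : ℚ) ^ (a + b - 2) / ((m : ℚ) ^ (a - 1) * (n : ℚ) ^ (b - 1))) =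
    (m + n : ℚ) ^ (m + n - 1) / ((m : ℚ) ^ (m - 1) * (n : ℚ) ^ (n - 1)) -
    (m * n : ℚ) / (m + n) * (Nat.choose (m + n) m : ℚ) := by
  obtain ⟨μ, rfl⟩ : ∃ μ, m = μ+1 := ⟨m-1, by omega⟩
  obtain ⟨ν, rfl⟩ : ∃ ν, n = ν+1 := ⟨n-1, by omega⟩
  have reindex : ∀ (f : ℕ → ℚ) (M : ℕ), ∑ a ∈ Icc 1 (M+1), f a = ∑ i ∈ range (M+1), f (M+1-i) := by
    intro f M
    rw [← Finset.Ico_add_one_right_eq_Icc, Finset.sum_Ico_eq_sum_range]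
    have h1 : M+1+1-1 = M+1 := by omega
    rw [h1, ← Finset.sum_range_reflect (fun i => f (1+i)) (M+1)]
    apply sum_congr rfl
    intro i hi
    have := mem_range.mp hi
    congr 1
    omega
  set Z : ℚ := (μ:ℚ)+(ν:ℚ)+2 with hZdef
  have hZ : Z ≠ 0 := by rw [hZdef]; positivity
  have hP : ((μ:ℚ)+1) ≠ 0 := by positivity
  have hQ : ((ν:ℚ)+1) ≠ 0 := by positivity
  set x0 : ℚ := ((μ:ℚ)+1)/Z with hx0def
  have hx0 : Z * x0 = (μ:ℚ)+1 := by
    rw [hx0def]; field_simp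
  have h1x : 1 - x0 = ((ν:ℚ)+1)/Z := by
    rw [hx0def, hZdef]; field_simp; ring
  have hW : ((μ+1:ℕ):ℚ) + ((ν+1:ℕ):ℚ) = Z := by push_cast; rw [hZdef]; ring
  have hPc : ((μ+1:ℕ):ℚ) = (μ:ℚ)+1 := by push_cast; ring
  have hQc : ((ν+1:ℕ):ℚ) = (ν:ℚ)+1 := by push_cast; ring
  -- reindex the double sum
  rw [reindex (fun a => ∑ b ∈ Icc 1 (ν+1),
      (Nat.choose ((μ+1) + (ν+1) - a - b) ((μ+1) - a) : ℚ) *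
        (((μ+1:ℕ) + (ν+1:ℕ) : ℚ) ^ (a + b - 2) /
          (((μ+1:ℕ) : ℚ) ^ (a - 1) * (((ν+1:ℕ)) : ℚ) ^ (b - 1)))) μ]
  have step1 : ∑ i ∈ range (μ+1), (∑ b ∈ Icc 1 (ν+1),
      (Nat.choose ((μ+1) + (ν+1) - (μ+1-i) - b) ((μ+1) - (μ+1-i)) : ℚ) *
        (((μ+1:ℕ) + (ν+1:ℕ) : ℚ) ^ ((μ+1-i) + b - 2) /
          (((μ+1:ℕ) : ℚ) ^ ((μ+1-i) - 1) * (((ν+1:ℕ)) : ℚ) ^ (b - 1))))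
      = ∑ i ∈ range (μ+1), ∑ j ∈ range (ν+1),
        (Z^(μ+ν) / (((μ:ℚ)+1)^μ * ((ν:ℚ)+1)^ν)) *
          ((Nat.choose (i+j) i : ℚ) * x0^i * (1-x0)^j) := by
    apply sum_congr rfl
    intro i hi
    have hiμ : i ≤ μ := by have := mem_range.mp hi; omega
    rw [reindex (fun b =>
      (Nat.choose ((μ+1) + (ν+1) - (μ+1-i) - b) ((μ+1) - (μ+1-i)) : ℚ) *
        (((μ+1:ℕ) + (ν+1:ℕ) : ℚ) ^ ((μ+1-i) + b - 2) /
          (((μ+1:ℕ) : ℚ) ^ ((μ+1-i) - 1) * (((ν+1:ℕ)) : ℚ) ^ (b - 1)))) ν]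
    apply sum_congr rfl
    intro j hj
    have hjν : j ≤ ν := by have := mem_range.mp hj; omega
    have e1 : (μ+1) + (ν+1) - (μ+1-i) - (ν+1-j) = i+j := by omega
    have e2 : (μ+1) - (μ+1-i) = i := by omega
    have e3 : (μ+1-i) + (ν+1-j) - 2 = μ+ν-i-j := by omega
    have e4 : (μ+1-i) - 1 = μ-i := by omega
    have e5 : (ν+1-j) - 1 = ν-j := by omega
    rw [e1, e2, e3, e4, e5, hW, hPc, hQc]
    have p1 : Z ^ (μ+ν-i-j) = Z^(μ+ν) / (Z^i * Z^j) := by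
      have : μ+ν-i-j = μ+ν-i-j := rfl
      rw [show μ+ν-i-j = (μ+ν-i)-j by omega, pow_sub₀ Z hZ (by omega),
        show μ+ν-i = (μ+ν)-i by omega, pow_sub₀ Z hZ (by omega)]
      ring
    have p2 : ((μ:ℚ)+1) ^ (μ-i) = ((μ:ℚ)+1)^μ / ((μ:ℚ)+1)^i := pow_sub₀ _ hP hiμ
    have p3 : ((ν:ℚ)+1) ^ (ν-j) = ((ν:ℚ)+1)^ν / ((ν:ℚ)+1)^j := pow_sub₀ _ hQ hjν
    rw [p1, p2, p3, hx0def, h1x, div_pow, div_pow]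
    field_simp
  rw [step1]
  have pull : ∑ i ∈ range (μ+1), ∑ j ∈ range (ν+1),
      (Z^(μ+ν) / (((μ:ℚ)+1)^μ * ((ν:ℚ)+1)^ν)) * ((Nat.choose (i+j) i : ℚ) * x0^i * (1-x0)^j)
      = (Z^(μ+ν) / (((μ:ℚ)+1)^μ * ((ν:ℚ)+1)^ν)) * ∑ j ∈ range (ν+1), ∑ i ∈ range (μ+1),
        ((Nat.choose (i+j) i : ℚ) * x0^i * (1-x0)^j) := by
    rw [Finset.mul_sum]
    rw [Finset.sum_comm]
    apply sum_congr rfl; intro i _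
    rw [Finset.mul_sum]
  rw [pull]
  rw [lem_main μ ν x0 hx0]
  -- now the RHS arithmetic
  have e6 : (μ+1) + (ν+1) - 1 = μ+ν+1 := by omega
  have e7 : (μ+1) - 1 = μ := by omega
  have e8 : (ν+1) - 1 = ν := by omega
  have e9 : (μ+1) + (ν+1) = μ+ν+2 := by omega
  rw [e6, e7, e8, e9, hW, hPc, hQc]
  rw [hx0def, h1x, div_pow, div_pow]
  have hCB : (0:ℚ) ≤ (Nat.choose (μ+ν+2) (μ+1) : ℚ) := by positivity
  field_simp
  ring
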